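/- Let ω be a fixed angle with 0 < ω < π/2, let r > 0 and s ≤ 0. For X > 0 with cos(ω)·X − sin(ω) > 0, define the points q = (2r(sin(ω)X² + cos(ω)X)/(X²+1), 2r(sin(ω)X + cos(ω))/(X²+1)), b = (s, s/X), and c = (s, (s − 2r·sin(ω))(sin(ω)X + cos(ω))/(cos(ω)X − sin(ω))) in ℝ². Then (1/2)·‖q − b‖·‖q − c‖·sin(ω) = (1/2)·sin(ω)·((2r·sin(ω) − s)X² + 2r·cos(ω)X − s)² / (X·(cos(ω)X − sin(ω))·(X²+1)). -/

import Mathlib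

open Real

/-- The point of the Euclidean plane with coordinates `x` and `y`. -/
def pt (x y : ℝ) : EuclideanSpace ℝ (Fin 2) := WithLp.toLp 2 ![x, y]

private lemma norm_pt_sub (x y u v : ℝ) :
    ‖pt x y - pt u v‖ = Real.sqrt ((x - u) ^ 2 + (y - v) ^ 2) := by
  have h : pt x y - pt u v = pt (x - u) (y - v) := by
    ext i; fin_cases i <;> simp [pt]
  rw [h, EuclideanSpace.norm_eq]
  simp [pt, Fin.sum_univ_two, sq_abs]

private lemma aux_S1 (sω cω r s X : ℝ) (hX : X ≠ 0) :
    (2 * r * (sω * X ^ 2 + cω * X) / (X ^ 2 + 1) - s) ^ 2 +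
      (2 * r * (sω * X + cω) / (X ^ 2 + 1) - s / X) ^ 2 =
    ((2 * r * sω - s) * X ^ 2 + 2 * r * cω * X - s) ^ 2 / (X ^ 2 * (X ^ 2 + 1)) := by
  have hx1 : (X : ℝ) ^ 2 + 1 ≠ 0 := by positivity
  field_simp
  ring

set_option maxHeartbeats 2000000 in
private lemma aux_S2 (cω sω r s X : ℝ) (h1 : sω ^ 2 + cω ^ 2 = 1) (hX : X ≠ 0)
    (hd : cω * X - sω ≠ 0) :
    (2 * r * (sω * X ^ 2 + cω * X) / (X ^ 2 + 1) - s) ^ 2 +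
      (2 * r * (sω * X + cω) / (X ^ 2 + 1) -
        (s - 2 * r * sω) * (sω * X + cω) / (cω * X - sω)) ^ 2 =
    ((2 * r * sω - s) * X ^ 2 + 2 * r * cω * X - s) ^ 2 /
      ((X ^ 2 + 1) * (cω * X - sω) ^ 2) := by
  have hx1 : (X : ℝ) ^ 2 + 1 ≠ 0 := by positivity
  have hd' : X * cω - sω ≠ 0 := by rwa [mul_comm]
  field_simp
  linear_combination (2 * r * X * (sω * X + cω) - (X ^ 2 + 1) * s) ^ 2 * (X ^ 2 + 1) * h1

theorem area_formula_arc_vertical_line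
    (ω r s X : ℝ) (hω₀ : 0 < ω) (hω₁ : ω < π / 2) (hr : 0 < r) (hs : s ≤ 0)
    (hX : 0 < X) (hX' : Real.cos ω * X - Real.sin ω > 0) :
    (let q := pt (2 * r * (Real.sin ω * X ^ 2 + Real.cos ω * X) / (X ^ 2 + 1))
       (2 * r * (Real.sin ω * X + Real.cos ω) / (X ^ 2 + 1))
     let b := pt s (s / X)
     let c := pt s ((s - 2 * r * Real.sin ω) * (Real.sin ω * X + Real.cos ω) /
       (Real.cos ω * X - Real.sin ω))
     (1 / 2) * ‖q - b‖ * ‖q - c‖ * Real.sin ω =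
       (1 / 2) * Real.sin ω *
         ((2 * r * Real.sin ω - s) * X ^ 2 + 2 * r * Real.cos ω * X - s) ^ 2 /
         (X * (Real.cos ω * X - Real.sin ω) * (X ^ 2 + 1))) := by
  intro q b c
  set sω := Real.sin ω with hsω
  set cω := Real.cos ω with hcω
  have hsω0 : 0 < sω := Real.sin_pos_of_pos_of_lt_pi hω₀ (by linarith [Real.pi_gt_three])
  have hcω0 : 0 < cω := Real.cos_pos_of_mem_Ioo ⟨by linarith, hω₁⟩
  have h1 : sω ^ 2 + cω ^ 2 = 1 := Real.sin_sq_add_cos_sq ω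
  have hXne : X ≠ 0 := ne_of_gt hX
  have hdne : cω * X - sω ≠ 0 := ne_of_gt hX'
  have hx1 : (0:ℝ) < X ^ 2 + 1 := by positivity
  set N : ℝ := (2 * r * sω - s) * X ^ 2 + 2 * r * cω * X - s with hN
  have hN0 : 0 < N := by
    have : 0 < 2 * r * sω - s := by nlinarith
    nlinarith
  have hqb : ‖q - b‖ = Real.sqrt (N ^ 2 / (X ^ 2 * (X ^ 2 + 1))) := by
    rw [norm_pt_sub, aux_S1 sω cω r s X hXne]
  have hqc : ‖q - c‖ = Real.sqrt (N ^ 2 / ((X ^ 2 + 1) * (cω * X - sω) ^ 2)) := by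
    rw [norm_pt_sub, aux_S2 cω sω r s X h1 hXne hdne]
  rw [hqb, hqc]
  have hval : N ^ 2 / (X ^ 2 * (X ^ 2 + 1)) * (N ^ 2 / ((X ^ 2 + 1) * (cω * X - sω) ^ 2)) =
      (N ^ 2 / (X * (cω * X - sω) * (X ^ 2 + 1))) ^ 2 := by
    field_simp
  have hsqrt : Real.sqrt (N ^ 2 / (X ^ 2 * (X ^ 2 + 1))) *
      Real.sqrt (N ^ 2 / ((X ^ 2 + 1) * (cω * X - sω) ^ 2)) =
      N ^ 2 / (X * (cω * X - sω) * (X ^ 2 + 1)) := by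
    rw [← Real.sqrt_mul (by positivity), hval, Real.sqrt_sq (by positivity)]
  linear_combination (sω / 2) * hsqrt
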